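/- Suppose λ₁ ≤ ρ* < (λ₁+λ₂)/2 and let cΘ ∈ [0,1] satisfy cΘ² ≤ (3ρ*⁻¹ − 2λ₁⁻¹ − λ₂⁻¹)/(2(λ₁⁻¹ − λ₂⁻¹)). Then every pair of nonzero vectors x, v with vᵀB x = 0, f(x) ≤ ρ*, and |vᵀA x| ≤ cΘ·‖v‖_A·‖x‖_A satisfies f(v) ≥ ρ*. -/

import Mathlib

open Matrix Finset

lemma s_eq_aux (l0 l1 r : ℝ) (h0 : 0 < l0) (h1 : l0 < l1) (hr : 0 < r) (hrl : r < l1) :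
    (3 * r⁻¹ - 2 * l0⁻¹ - l1⁻¹) / (2 * (l0⁻¹ - l1⁻¹))
      = (3 * (l0 * (l1 - r) / (r * (l1 - l0))) - 2) / 2 := by
  have h0' : l0 ≠ 0 := h0.ne'
  have h1' : l1 ≠ 0 := (h0.trans h1).ne'
  have hr' : r ≠ 0 := hr.ne'
  have hd : l1 - l0 ≠ 0 := sub_ne_zero.mpr h1.ne'
  field_simp
  ring

set_option maxHeartbeats 2000000 in
lemma key_scalar {N : ℕ} (lam : Fin (N+2) → ℝ)
    (hlam_pos : 0 < lam 0) (hgap : lam 0 < lam 1) (hmono : Monotone lam)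
    (ρstar : ℝ) (hρ1 : lam 0 ≤ ρstar) (hρ2 : ρstar < (lam 0 + lam 1) / 2)
    (cΘ : ℝ) (hcΘ0 : 0 ≤ cΘ)
    (hcΘ : cΘ ^ 2 ≤ (3 * ρstar⁻¹ - 2 * (lam 0)⁻¹ - (lam 1)⁻¹) / (2 * ((lam 0)⁻¹ - (lam 1)⁻¹)))
    (c d : Fin (N+2) → ℝ) (hc : c ≠ 0) (hd : d ≠ 0)
    (hfx : (∑ i, lam i * c i ^ 2) ≤ ρstar * ∑ i, c i ^ 2)
    (hangle : |∑ i, lam i * d i * c i| ≤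
        cΘ * Real.sqrt (∑ i, lam i * d i ^ 2) * Real.sqrt (∑ i, lam i * c i ^ 2)) :
    ρstar * (∑ i, d i ^ 2) ≤ ∑ i, lam i * d i ^ 2 := by
  have hρ0 : 0 < ρstar := lt_of_lt_of_le hlam_pos hρ1
  have hl1pos : 0 < lam 1 := lt_trans hlam_pos hgap
  have hrl1 : ρstar < lam 1 := by linarith
  have hlami : ∀ i, 0 < lam i := fun i => lt_of_lt_of_le hlam_pos (hmono (Fin.zero_le i))
  have hlam1le : ∀ i : Fin (N+2), i ≠ 0 → lam 1 ≤ lam i := by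
    intro i hi
    have h0 : i.val ≠ 0 := by intro h; apply hi; ext; simp [h]
    exact hmono (by rw [Fin.le_def, Fin.val_one]; omega)
  set E := Finset.univ.erase (0 : Fin (N+2)) with hE
  set Ac := ∑ i, lam i * c i ^ 2 with hAcdef
  set Ad := ∑ i, lam i * d i ^ 2 with hAddef
  set a := lam 0 * c 0 ^ 2 with hadef
  set a' := lam 0 * d 0 ^ 2 with ha'def
  set b := ∑ i ∈ E, lam i * c i ^ 2 with hbdef
  set b' := ∑ i ∈ E, lam i * d i ^ 2 with hb'def
  have hab : a + b = Ac := by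
    rw [hadef, hbdef, hAcdef]
    exact Finset.add_sum_erase _ (fun i => lam i * c i ^ 2) (Finset.mem_univ 0)
  have hab' : a' + b' = Ad := by
    rw [ha'def, hb'def, hAddef]
    exact Finset.add_sum_erase _ (fun i => lam i * d i ^ 2) (Finset.mem_univ 0)
  have hbnn : 0 ≤ b := Finset.sum_nonneg fun i _ => mul_nonneg (hlami i).le (sq_nonneg _)
  have hb'nn : 0 ≤ b' := Finset.sum_nonneg fun i _ => mul_nonneg (hlami i).le (sq_nonneg _)
  have hAcpos : 0 < Ac := by
    obtain ⟨i, hi⟩ := Function.ne_iff.mp hc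
    exact Finset.sum_pos' (fun j _ => mul_nonneg (hlami j).le (sq_nonneg _))
      ⟨i, Finset.mem_univ i, mul_pos (hlami i) (pow_two_pos_of_ne_zero hi)⟩
  have hAdpos : 0 < Ad := by
    obtain ⟨i, hi⟩ := Function.ne_iff.mp hd
    exact Finset.sum_pos' (fun j _ => mul_nonneg (hlami j).le (sq_nonneg _))
      ⟨i, Finset.mem_univ i, mul_pos (hlami i) (pow_two_pos_of_ne_zero hi)⟩
  -- bound on M-norms
  have hMb : ∀ e : Fin (N+2) → ℝ,
      lam 0 * lam 1 * ∑ i, e i ^ 2 ≤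
        lam 1 * (lam 0 * e 0 ^ 2) + lam 0 * ∑ i ∈ E, lam i * e i ^ 2 := by
    intro e
    rw [← Finset.add_sum_erase Finset.univ (fun i => e i ^ 2) (Finset.mem_univ 0)]
    rw [mul_add, Finset.mul_sum, Finset.mul_sum]
    refine add_le_add (le_of_eq (by ring)) (Finset.sum_le_sum fun i hi => ?_)
    have h1i : lam 1 ≤ lam i := hlam1le i (Finset.mem_erase.mp hi).1
    nlinarith [mul_le_mul_of_nonneg_left h1i (mul_nonneg hlam_pos.le (sq_nonneg (e i)))]
  have hMc2 : lam 0 * lam 1 * ∑ i, c i ^ 2 ≤ lam 1 * a + lam 0 * b := hMb c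
  have hMd2 : lam 0 * lam 1 * ∑ i, d i ^ 2 ≤ lam 1 * a' + lam 0 * b' := hMb d
  have hden : 0 < ρstar * (lam 1 - lam 0) := mul_pos hρ0 (by linarith)
  set s : ℝ := lam 0 * (lam 1 - ρstar) / (ρstar * (lam 1 - lam 0)) with hsdef
  have h1 : lam 0 * (lam 1 - ρstar) * (a + b) ≤ ρstar * (lam 1 - lam 0) * a := by
    have k0 : a + b ≤ ρstar * ∑ i, c i ^ 2 := by rw [hab]; exact hfx
    have k1 := mul_le_mul_of_nonneg_left k0 (le_of_lt (mul_pos hlam_pos hl1pos))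
    have k2 := mul_le_mul_of_nonneg_left hMc2 hρ0.le
    nlinarith [k1, k2]
  have hsa : s * (a + b) ≤ a := by
    rw [hsdef, div_mul_eq_mul_div, div_le_iff₀ hden]
    nlinarith [h1]
  have hs_eq : (3 * ρstar⁻¹ - 2 * (lam 0)⁻¹ - (lam 1)⁻¹) / (2 * ((lam 0)⁻¹ - (lam 1)⁻¹))
      = (3 * s - 2) / 2 := by
    rw [hsdef]
    exact s_eq_aux (lam 0) (lam 1) ρstar hlam_pos hgap hρ0 hrl1
  have hs_mul : s * (ρstar * (lam 1 - lam 0)) = lam 0 * (lam 1 - ρstar) :=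
    div_mul_cancel₀ _ hden.ne'
  clear_value s Ac Ad a a' b b'
  have hcΘ2 : cΘ ^ 2 ≤ (3 * s - 2) / 2 := by rw [hs_eq] at hcΘ; exact hcΘ
  have hs23 : 2/3 ≤ s := by linarith [hcΘ2, sq_nonneg cΘ]
  have hs1 : s ≤ 1 := by
    have h : s * Ac ≤ 1 * Ac := by
      have he := congrArg (fun z => s * z) hab
      rw [one_mul]; linarith [hsa, hbnn, he]
    exact le_of_mul_le_mul_right h hAcpos
  have hcs : cΘ ≤ 2 * s - 1 := by
    have hq : (3 * s - 2) / 2 ≤ (2 * s - 1) ^ 2 := by linarith [sq_nonneg (s - 11/16)]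
    have h1 : cΘ ≤ |2 * s - 1| := by
      have h2 := Real.sqrt_le_sqrt (le_trans hcΘ2 hq)
      rwa [Real.sqrt_sq hcΘ0, Real.sqrt_sq_eq_abs] at h2
    rwa [abs_of_nonneg (by linarith)] at h1
  suffices hkey : a' ≤ s * (a' + b') by
    have h2 : ρstar * (lam 1 - lam 0) * a' ≤ lam 0 * (lam 1 - ρstar) * (a' + b') := by
      have hm := mul_le_mul_of_nonneg_right hkey hden.le
      have he := congrArg (fun z => (a' + b') * z) hs_mul
      linarith [hm, he]
    have h3 := mul_le_mul_of_nonneg_left hMd2 hρ0.le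
    have h4 : lam 0 * lam 1 * (ρstar * ∑ i, d i ^ 2) ≤ lam 0 * lam 1 * Ad := by
      have he2 := congrArg (fun z => lam 0 * lam 1 * z) hab'
      linarith [h3, h2, he2]
    exact le_of_mul_le_mul_left h4 (mul_pos hlam_pos hl1pos)
  by_contra hcon
  push_neg at hcon
  have hs0 : (0:ℝ) < s := by linarith
  have ha_ge : s * Ac ≤ a := by rw [← hab]; exact hsa
  have ha'_gt : s * Ad < a' := by rw [← hab']; exact hcon
  have hbb : b ≤ (1 - s) * Ac := by linarith [ha_ge, hab]
  have hbb' : b' ≤ (1 - s) * Ad := by linarith [ha'_gt, hab']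
  set T := ∑ i ∈ E, lam i * d i * c i with hTdef
  have hsplit : (∑ i, lam i * d i * c i) = lam 0 * d 0 * c 0 + T := by
    rw [hTdef]
    exact (Finset.add_sum_erase _ (fun i => lam i * d i * c i) (Finset.mem_univ 0)).symm
  have hCS : T ^ 2 ≤ b' * b := by
    rw [hTdef, hb'def, hbdef]
    have key := Finset.sum_mul_sq_le_sq_mul_sq E
      (fun i => Real.sqrt (lam i) * d i) (fun i => Real.sqrt (lam i) * c i)
    have e1 : ∀ i ∈ E, Real.sqrt (lam i) * d i * (Real.sqrt (lam i) * c i)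
        = lam i * d i * c i := by
      intro i _
      rw [mul_mul_mul_comm, Real.mul_self_sqrt (hlami i).le]; ring
    have e2 : ∀ i ∈ E, (Real.sqrt (lam i) * d i) ^ 2 = lam i * d i ^ 2 := by
      intro i _; rw [mul_pow, Real.sq_sqrt (hlami i).le]
    have e3 : ∀ i ∈ E, (Real.sqrt (lam i) * c i) ^ 2 = lam i * c i ^ 2 := by
      intro i _; rw [mul_pow, Real.sq_sqrt (hlami i).le]
    rw [Finset.sum_congr rfl e1, Finset.sum_congr rfl e2, Finset.sum_congr rfl e3] at key
    exact key
  have hT : |T| ≤ Real.sqrt (b' * b) := by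
    rw [← Real.sqrt_sq_eq_abs]
    exact Real.sqrt_le_sqrt hCS
  have h2 : Real.sqrt (a * a') ≤ cΘ * Real.sqrt Ad * Real.sqrt Ac + Real.sqrt (b' * b) := by
    have haa : Real.sqrt (a * a') = |lam 0 * d 0 * c 0| := by
      rw [show a * a' = (lam 0 * d 0 * c 0) ^ 2 by rw [hadef, ha'def]; ring]
      exact Real.sqrt_sq_eq_abs _
    have habs : |lam 0 * d 0 * c 0| ≤ |∑ i, lam i * d i * c i| + |T| := by
      have : lam 0 * d 0 * c 0 = (∑ i, lam i * d i * c i) - T := by rw [hsplit]; ring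
      rw [this]
      exact abs_sub _ _
    rw [haa]
    calc |lam 0 * d 0 * c 0| ≤ |∑ i, lam i * d i * c i| + |T| := habs
      _ ≤ cΘ * Real.sqrt Ad * Real.sqrt Ac + Real.sqrt (b' * b) :=
        add_le_add hangle hT
  set X := Real.sqrt Ac * Real.sqrt Ad with hXdef
  have hXpos : 0 < X := mul_pos (Real.sqrt_pos.mpr hAcpos) (Real.sqrt_pos.mpr hAdpos)
  have hlow : s * X < Real.sqrt (a * a') := by
    have hp : s * Ac * (s * Ad) < a * a' := by
      have hx1 : 0 < s * Ac := mul_pos hs0 hAcpos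
      have hx2 : 0 < s * Ad := mul_pos hs0 hAdpos
      have m1 : s * Ac * (s * Ad) ≤ a * (s * Ad) := mul_le_mul_of_nonneg_right ha_ge hx2.le
      have m2 : a * (s * Ad) < a * a' := mul_lt_mul_of_pos_left ha'_gt (lt_of_lt_of_le hx1 ha_ge)
      linarith
    have := Real.sqrt_lt_sqrt (by positivity) hp
    calc s * X = Real.sqrt (s * Ac * (s * Ad)) := by
          rw [show s * Ac * (s * Ad) = (s*s) * (Ac * Ad) by ring,
            Real.sqrt_mul (by positivity), Real.sqrt_mul_self hs0.le,
            Real.sqrt_mul hAcpos.le, hXdef]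
      _ < Real.sqrt (a * a') := this
  have hup : Real.sqrt (b' * b) ≤ (1 - s) * X := by
    have h1s : (0:ℝ) ≤ 1 - s := by linarith
    have hp : b' * b ≤ ((1-s) * Ac) * ((1-s) * Ad) := by
      have m1 : b' * b ≤ b' * ((1-s) * Ac) := mul_le_mul_of_nonneg_left hbb hb'nn
      have m2 : b' * ((1-s) * Ac) ≤ ((1-s) * Ad) * ((1-s) * Ac) :=
        mul_le_mul_of_nonneg_right hbb' (mul_nonneg h1s hAcpos.le)
      have m3 : ((1-s) * Ad) * ((1-s) * Ac) = ((1-s) * Ac) * ((1-s) * Ad) := by ring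
      linarith
    have := Real.sqrt_le_sqrt hp
    calc Real.sqrt (b' * b) ≤ Real.sqrt (((1-s) * Ac) * ((1-s) * Ad)) := this
      _ = (1 - s) * X := by
          rw [show ((1-s) * Ac) * ((1-s) * Ad) = ((1-s)*(1-s)) * (Ac * Ad) by ring,
            Real.sqrt_mul (by positivity), Real.sqrt_mul_self h1s,
            Real.sqrt_mul hAcpos.le, hXdef]
  have hcb : cΘ * Real.sqrt Ad * Real.sqrt Ac ≤ (2*s - 1) * X := by
    have : cΘ * Real.sqrt Ad * Real.sqrt Ac = cΘ * X := by rw [hXdef]; ring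
    rw [this]
    exact mul_le_mul_of_nonneg_right hcs hXpos.le
  linarith [h2, hlow, hup, hcb]


/-- Under a small leading angle, B-orthogonal directions have large Rayleigh quotient. -/
theorem statement_11 {n : ℕ}
    (A M B : Matrix (Fin (n+2)) (Fin (n+2)) ℝ)
    (hA : A.PosDef) (hM : M.PosDef) (hB : B.PosDef)
    (lam : Fin (n+2) → ℝ) (u : Fin (n+2) → (Fin (n+2) → ℝ))
    (hlam_pos : 0 < lam 0) (hgap : lam 0 < lam 1) (hmono : Monotone lam)
    (heig : ∀ i, A *ᵥ u i = lam i • (M *ᵥ u i))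
    (horth : ∀ i j, u i ⬝ᵥ M *ᵥ u j = if i = j then 1 else 0)
    (ρstar : ℝ) (hρ1 : lam 0 ≤ ρstar) (hρ2 : ρstar < (lam 0 + lam 1) / 2)
    (cΘ : ℝ) (hcΘ0 : 0 ≤ cΘ) (hcΘ1 : cΘ ≤ 1)
    (hcΘ : cΘ ^ 2 ≤ (3 * ρstar⁻¹ - 2 * (lam 0)⁻¹ - (lam 1)⁻¹) / (2 * ((lam 0)⁻¹ - (lam 1)⁻¹)))
    (x v : Fin (n+2) → ℝ) (hx : x ≠ 0) (hv : v ≠ 0)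
    (hvBx : v ⬝ᵥ B *ᵥ x = 0)
    (hfx : (x ⬝ᵥ A *ᵥ x) / (x ⬝ᵥ M *ᵥ x) ≤ ρstar)
    (hangle : |v ⬝ᵥ A *ᵥ x| ≤ cΘ * Real.sqrt (v ⬝ᵥ A *ᵥ v) * Real.sqrt (x ⬝ᵥ A *ᵥ x)) :
    ρstar ≤ (v ⬝ᵥ A *ᵥ v) / (v ⬝ᵥ M *ᵥ v) := by
  classical
  set U : Matrix (Fin (n+2)) (Fin (n+2)) ℝ := Matrix.of u with hU
  have hentry : ∀ (S : Matrix (Fin (n+2)) (Fin (n+2)) ℝ) i j,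
      (U * S * Uᵀ) i j = u i ⬝ᵥ S *ᵥ u j := by
    intro S i j
    simp only [Matrix.mul_apply, Matrix.transpose_apply, Matrix.mulVec, dotProduct,
      hU, Matrix.of_apply, Finset.sum_mul, Finset.mul_sum]
    rw [Finset.sum_comm]
    exact Finset.sum_congr rfl fun k _ => Finset.sum_congr rfl fun l _ => by ring
  have hUMU : U * M * Uᵀ = 1 := by
    ext i j
    rw [hentry, horth]
    simp [Matrix.one_apply]
  have hUAU : U * A * Uᵀ = Matrix.diagonal lam := by
    ext i j
    rw [hentry, heig j, dotProduct_smul, horth]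
    simp only [smul_eq_mul, Matrix.diagonal_apply]
    split_ifs with h
    · subst h; simp
    · simp
  have h4 : (Uᵀ * U) * M = 1 := by
    rw [Matrix.mul_assoc] at hUMU
    have h2 : (M * Uᵀ) * U = 1 := mul_eq_one_comm.mp hUMU
    rw [Matrix.mul_assoc] at h2
    exact mul_eq_one_comm.mp h2
  have hUMU' : U * M * Uᵀ = 1 := by rw [Matrix.mul_assoc] at hUMU ⊢; exact hUMU
  set c : Fin (n+2) → ℝ := U *ᵥ (M *ᵥ x) with hcdef
  set d : Fin (n+2) → ℝ := U *ᵥ (M *ᵥ v) with hddef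
  have hxc : Uᵀ *ᵥ c = x := by
    rw [hcdef, Matrix.mulVec_mulVec, Matrix.mulVec_mulVec, h4, Matrix.one_mulVec]
  have hvd : Uᵀ *ᵥ d = v := by
    rw [hddef, Matrix.mulVec_mulVec, Matrix.mulVec_mulVec, h4, Matrix.one_mulVec]
  have hquad : ∀ (S : Matrix (Fin (n+2)) (Fin (n+2)) ℝ) (e f : Fin (n+2) → ℝ),
      (Uᵀ *ᵥ e) ⬝ᵥ S *ᵥ (Uᵀ *ᵥ f) = e ⬝ᵥ (U * S * Uᵀ) *ᵥ f := by
    intro S e f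
    rw [Matrix.mulVec_transpose, Matrix.dotProduct_mulVec, Matrix.vecMul_vecMul,
      ← Matrix.dotProduct_mulVec, Matrix.mulVec_mulVec, Matrix.mul_assoc]
  have hxMx : x ⬝ᵥ M *ᵥ x = ∑ i, c i ^ 2 := by
    rw [← hxc, hquad, hUMU', Matrix.one_mulVec]
    simp [dotProduct, sq]
  have hvMv : v ⬝ᵥ M *ᵥ v = ∑ i, d i ^ 2 := by
    rw [← hvd, hquad, hUMU', Matrix.one_mulVec]
    simp [dotProduct, sq]
  have hxAx : x ⬝ᵥ A *ᵥ x = ∑ i, lam i * c i ^ 2 := by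
    rw [← hxc, hquad, hUAU]
    simp only [dotProduct, Matrix.mulVec_diagonal]
    exact Finset.sum_congr rfl fun i _ => by ring
  have hvAv : v ⬝ᵥ A *ᵥ v = ∑ i, lam i * d i ^ 2 := by
    rw [← hvd, hquad, hUAU]
    simp only [dotProduct, Matrix.mulVec_diagonal]
    exact Finset.sum_congr rfl fun i _ => by ring
  have hvAx : v ⬝ᵥ A *ᵥ x = ∑ i, lam i * d i * c i := by
    rw [← hxc, ← hvd, hquad, hUAU]
    simp only [dotProduct, Matrix.mulVec_diagonal]
    exact Finset.sum_congr rfl fun i _ => by ring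
  have hcne : c ≠ 0 := by
    intro h0
    exact hx (by rw [← hxc, h0, Matrix.mulVec_zero])
  have hdne : d ≠ 0 := by
    intro h0
    exact hv (by rw [← hvd, h0, Matrix.mulVec_zero])
  have hMx_pos : 0 < x ⬝ᵥ M *ᵥ x := by
    have := hM.dotProduct_mulVec_pos hx
    simpa using this
  have hMv_pos : 0 < v ⬝ᵥ M *ᵥ v := by
    have := hM.dotProduct_mulVec_pos hv
    simpa using this
  have hfx' : (∑ i, lam i * c i ^ 2) ≤ ρstar * ∑ i, c i ^ 2 := by
    rw [← hxAx, ← hxMx]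
    exact (div_le_iff₀ hMx_pos).mp hfx
  have hangle' : |∑ i, lam i * d i * c i| ≤
      cΘ * Real.sqrt (∑ i, lam i * d i ^ 2) * Real.sqrt (∑ i, lam i * c i ^ 2) := by
    rw [← hvAx, ← hvAv, ← hxAx]
    exact hangle
  rw [le_div_iff₀ hMv_pos, hvMv, hvAv]
  exact key_scalar lam hlam_pos hgap hmono ρstar hρ1 hρ2 cΘ hcΘ0 hcΘ c d hcne hdne hfx' hangle'
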